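/- Let X : Ξ × Θ → ℝ^d be integrable with respect to P = P_Ξ ⊗ P_Θ, suppose E : Θ → ℝ^m is a bijection with measurable inverse E⁻¹, the density f_E of E_*P_Θ is continuous, and for every ξ ∈ Ξ the map y ↦ X(ξ, E⁻¹(y)) is continuous on ℝ^m. Define Φ : ℝ^m → ℝ^d by Φ(y) = (∫_Ξ X(ξ, E⁻¹(y − Y(ξ))) · f_E(y − Y(ξ)) dP_Ξ(ξ)) / (∫_Ξ f_E(y − Y(ξ)) dP_Ξ(ξ)) whenever the denominator is positive (and Φ(y) = 0 otherwise). Then Φ is a version of the conditional expectation of X given the measurement Z, i.e. Φ is Z_*P-integrable and ∫_{Z⁻¹(B)} X dP = ∫_{Z⁻¹(B)} Φ∘Z dP for every Borel set B ⊆ ℝ^m. -/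

import Mathlib

open MeasureTheory Set ENNReal NNReal

lemma prod_withDensity_right' {α β : Type*} [MeasurableSpace α] [MeasurableSpace β]
    (μ : Measure α) (ν : Measure β) [SFinite μ] [SFinite ν]
    {f : β → ℝ≥0∞} (hf : Measurable f) :
    μ.prod (ν.withDensity f) = (μ.prod ν).withDensity (fun q => f q.2) := by
  have hf2 : Measurable fun q : α × β => f q.2 := hf.comp measurable_snd
  ext s hs
  rw [Measure.prod_apply hs, withDensity_apply _ hs, ← lintegral_indicator hs,
    lintegral_prod _ (hf2.indicator hs).aemeasurable]
  refine lintegral_congr fun x => ?_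
  rw [withDensity_apply _ (measurable_prodMk_left hs),
    ← lintegral_indicator (measurable_prodMk_left hs)]
  rfl


/-- Conditioned expectation (Theorem 1 of the paper): for an integrable random variable
`X : Ξ × Θ → ℝ^d` and the measurement `Z(ξ,θ) = Y(ξ) + E(θ)` with bijective error `E`
having continuous density `f_E`, the function
`Φ(y) = (∫_Ξ X(ξ, E⁻¹(y − Y(ξ))) f_E(y − Y(ξ)) dP_Ξ) / (∫_Ξ f_E(y − Y(ξ)) dP_Ξ)`
(set to `0` where the denominator is not positive) is a version of the conditional
expectation of `X` given `Z`. -/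
theorem conditioned_expectation_formula
    {Ξ Θ : Type*} [MeasurableSpace Ξ] [MeasurableSpace Θ]
    [TopologicalSpace Θ] [BorelSpace Θ]
    (PΞ : Measure Ξ) (PΘ : Measure Θ)
    [IsProbabilityMeasure PΞ] [IsProbabilityMeasure PΘ]
    {m d : ℕ}
    (Y : Ξ → EuclideanSpace ℝ (Fin m)) (hY : Measurable Y)
    (E : Θ → EuclideanSpace ℝ (Fin m)) (hE : Measurable E)
    (Einv : EuclideanSpace ℝ (Fin m) → Θ) (hEinvMeas : Measurable Einv)
    (hEinvLeft : Function.LeftInverse Einv E)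
    (hEinvRight : Function.RightInverse Einv E)
    (fE : EuclideanSpace ℝ (Fin m) → ℝ) (hfE0 : ∀ y, 0 ≤ fE y)
    (hfEcont : Continuous fE)
    (hfEdens : Measure.map E PΘ = volume.withDensity (fun y => ENNReal.ofReal (fE y)))
    (X : Ξ × Θ → EuclideanSpace ℝ (Fin d))
    (hXint : Integrable X (PΞ.prod PΘ))
    (hXcont : ∀ ξ : Ξ, Continuous fun y => X (ξ, Einv y))
    (Z : Ξ × Θ → EuclideanSpace ℝ (Fin m))
    (hZ : Z = fun p => Y p.1 + E p.2)
    (Φ : EuclideanSpace ℝ (Fin m) → EuclideanSpace ℝ (Fin d))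
    (hΦ : Φ = fun y =>
      if 0 < ∫ ξ, fE (y - Y ξ) ∂PΞ then
        (∫ ξ, fE (y - Y ξ) ∂PΞ)⁻¹ •
          ∫ ξ, fE (y - Y ξ) • X (ξ, Einv (y - Y ξ)) ∂PΞ
      else 0) :
    Integrable Φ (Measure.map Z (PΞ.prod PΘ)) ∧
    ∀ B : Set (EuclideanSpace ℝ (Fin m)), MeasurableSet B →
      ∫ ω in Z ⁻¹' B, X ω ∂(PΞ.prod PΘ)
        = ∫ ω in Z ⁻¹' B, Φ (Z ω) ∂(PΞ.prod PΘ) := by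
  classical
  subst hZ
  set μ : Measure (Ξ × Θ) := PΞ.prod PΘ with hμdef
  set vol : Measure (EuclideanSpace ℝ (Fin m)) := volume with hvoldef
  -- measurable version of X
  have hXm : AEStronglyMeasurable X μ := hXint.1
  set X' : Ξ × Θ → EuclideanSpace ℝ (Fin d) := hXm.mk X with hX'def
  have hX'sm : StronglyMeasurable X' := hXm.stronglyMeasurable_mk
  have hXX' : X =ᵐ[μ] X' := hXm.ae_eq_mk
  have hX'int : Integrable X' μ := (integrable_congr hXX').mp hXint
  -- density as ℝ≥0∞
  set h : EuclideanSpace ℝ (Fin m) → ℝ≥0∞ := fun w => ENNReal.ofReal (fE w) with hhdef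
  have hhm : Measurable h := ENNReal.measurable_ofReal.comp hfEcont.measurable
  -- g
  set g : Ξ × EuclideanSpace ℝ (Fin m) → EuclideanSpace ℝ (Fin d) :=
    fun q => X' (q.1, Einv q.2) with hgdef
  have hgsm : StronglyMeasurable g :=
    hX'sm.comp_measurable (measurable_fst.prodMk (hEinvMeas.comp measurable_snd))
  -- T
  set T : Ξ × Θ → Ξ × EuclideanSpace ℝ (Fin m) := fun p => (p.1, E p.2) with hTdef
  have hTm : Measurable T := measurable_fst.prodMk (hE.comp measurable_snd)
  have hmapT : μ.map T = PΞ.prod (vol.withDensity h) := by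
    have hT : T = Prod.map id E := rfl
    rw [hT, ← Measure.map_prod_map _ _ measurable_id hE, Measure.map_id, hfEdens]
  have hν : PΞ.prod (vol.withDensity h) = (PΞ.prod vol).withDensity (fun q => h q.2) :=
    prod_withDensity_right' _ _ hhm
  have hgT : (g ∘ T) = X' := by
    funext p; simp only [Function.comp, hgdef, hTdef, hEinvLeft p.2]
  have hgint : Integrable g (PΞ.prod (vol.withDensity h)) := by
    rw [← hmapT, integrable_map_measure hgsm.aestronglyMeasurable hTm.aemeasurable, hgT]
    exact hX'int
  -- K and its integrability
  set K : Ξ × EuclideanSpace ℝ (Fin m) → EuclideanSpace ℝ (Fin d) :=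
    fun q => fE q.2 • g q with hKdef
  have hKsm : StronglyMeasurable K :=
    ((hfEcont.measurable.comp measurable_snd).stronglyMeasurable).smul hgsm
  have hhsnd : (fun q : Ξ × EuclideanSpace ℝ (Fin m) => h q.2)
      = fun q => ((fE q.2).toNNReal : ℝ≥0∞) := rfl
  have hKint : Integrable K (PΞ.prod vol) := by
    have h1 := hgint
    rw [hν, hhsnd, integrable_withDensity_iff_integrable_smul₀
      (f := fun q : Ξ × EuclideanSpace ℝ (Fin m) => (fE q.2).toNNReal)
      ((hfEcont.measurable.comp measurable_snd).real_toNNReal.aemeasurable)] at h1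
    refine (integrable_congr (Filter.Eventually.of_forall fun q => ?_)).mp h1
    rw [NNReal.smul_def, Real.coe_toNNReal _ (hfE0 _)]
  -- φ measure preserving
  set φ : Ξ × EuclideanSpace ℝ (Fin m) → Ξ × EuclideanSpace ℝ (Fin m) :=
    fun q => (q.1, q.2 - Y q.1) with hφdef
  have hφ : MeasurePreserving φ (PΞ.prod vol) (PΞ.prod vol) :=
    (MeasurePreserving.id PΞ).skew_product (g := fun ξ y => y - Y ξ)
      (measurable_snd.sub (hY.comp measurable_fst))
      (Filter.Eventually.of_forall fun ξ => (measurePreserving_sub_right vol (Y ξ)).map_eq)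
  -- G
  set G : Ξ × EuclideanSpace ℝ (Fin m) → EuclideanSpace ℝ (Fin d) :=
    fun q => fE (q.2 - Y q.1) • g (q.1, q.2 - Y q.1) with hGdef
  have hKφ : K ∘ φ = G := rfl
  have hGsm : StronglyMeasurable G := hKsm.comp_measurable hφ.measurable
  have hGint : Integrable G (PΞ.prod vol) := by
    rw [← hKφ]; exact (hφ.integrable_comp hKsm.aestronglyMeasurable).mpr hKint
  -- ρ'
  set ρ' : EuclideanSpace ℝ (Fin m) → ℝ≥0∞ := fun y => ∫⁻ ξ, h (y - Y ξ) ∂PΞ with hρ'def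
  have hρ'uncm : Measurable fun r : EuclideanSpace ℝ (Fin m) × Ξ => h (r.1 - Y r.2) :=
    hhm.comp (measurable_fst.sub (hY.comp measurable_snd))
  have hρ'm : Measurable ρ' := Measurable.lintegral_prod_right hρ'uncm
  -- Z measurable
  have hZm : Measurable fun p : Ξ × Θ => Y p.1 + E p.2 :=
    (hY.comp measurable_fst).add (hE.comp measurable_snd)
  have hSm : Measurable fun q : Ξ × EuclideanSpace ℝ (Fin m) => Y q.1 + q.2 :=
    (hY.comp measurable_fst).add measurable_snd
  -- density of map Z
  have hmapZ : μ.map (fun p : Ξ × Θ => Y p.1 + E p.2) = vol.withDensity ρ' := by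
    ext s hs
    rw [withDensity_apply _ hs, Measure.map_apply hZm hs]
    have hpre : (fun p : Ξ × Θ => Y p.1 + E p.2) ⁻¹' s
        = T ⁻¹' ((fun q : Ξ × EuclideanSpace ℝ (Fin m) => Y q.1 + q.2) ⁻¹' s) := rfl
    rw [hpre, ← Measure.map_apply hTm (hSm hs), hmapT, hν,
      withDensity_apply _ (hSm hs), ← lintegral_indicator (hSm hs)]
    have hFm : Measurable (((fun q : Ξ × EuclideanSpace ℝ (Fin m) => Y q.1 + q.2) ⁻¹' s).indicator
        (fun q : Ξ × EuclideanSpace ℝ (Fin m) => h q.2)) :=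
      (hhm.comp measurable_snd).indicator (hSm hs)
    rw [← hφ.lintegral_comp hFm]
    have hcomp : ∀ q : Ξ × EuclideanSpace ℝ (Fin m),
        ((fun q : Ξ × EuclideanSpace ℝ (Fin m) => Y q.1 + q.2) ⁻¹' s).indicator
          (fun q : Ξ × EuclideanSpace ℝ (Fin m) => h q.2) (φ q)
        = if q.2 ∈ s then h (q.2 - Y q.1) else 0 := by
      intro q
      have : (Y q.1 + (q.2 - Y q.1)) = q.2 := by abel
      simp only [Set.indicator_apply, Set.mem_preimage, hφdef, this]
    calc ∫⁻ q, ((fun q : Ξ × EuclideanSpace ℝ (Fin m) => Y q.1 + q.2) ⁻¹' s).indicator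
          (fun q : Ξ × EuclideanSpace ℝ (Fin m) => h q.2) (φ q) ∂(PΞ.prod vol)
        = ∫⁻ q : Ξ × EuclideanSpace ℝ (Fin m),
            (if q.2 ∈ s then h (q.2 - Y q.1) else 0) ∂(PΞ.prod vol) :=
          lintegral_congr hcomp
      _ = ∫⁻ ξ, ∫⁻ y, (if y ∈ s then h (y - Y ξ) else 0) ∂vol ∂PΞ := by
          refine lintegral_prod _ ?_
          exact (Measurable.ite (measurable_snd hs)
            (hhm.comp (measurable_snd.sub (hY.comp measurable_fst))) measurable_const).aemeasurable
      _ = ∫⁻ y, ∫⁻ ξ, (if y ∈ s then h (y - Y ξ) else 0) ∂PΞ ∂vol := by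
          refine lintegral_lintegral_swap ?_
          exact (Measurable.ite (measurable_snd hs)
            (hhm.comp (measurable_snd.sub (hY.comp measurable_fst)))
            measurable_const).aemeasurable
      _ = ∫⁻ y, s.indicator ρ' y ∂vol := by
          refine lintegral_congr fun y => ?_
          by_cases hy : y ∈ s <;> simp [hy, Set.indicator_apply, hρ'def]
      _ = ∫⁻ y in s, ρ' y ∂vol := lintegral_indicator hs _
  -- total mass of ρ'
  have hρ'tot : ∫⁻ y, ρ' y ∂vol = 1 := by
    have h1 : (μ.map (fun p : Ξ × Θ => Y p.1 + E p.2)) univ = 1 := by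
      rw [Measure.map_apply hZm MeasurableSet.univ, Set.preimage_univ]
      exact measure_univ
    rw [hmapZ, withDensity_apply _ MeasurableSet.univ, Measure.restrict_univ] at h1
    exact h1
  have hρ'fin : ∀ᵐ y ∂vol, ρ' y < ∞ :=
    ae_lt_top hρ'm (by rw [hρ'tot]; exact one_ne_top)
  -- a.e. integrability and Bochner/lintegral comparison for the denominator
  have hρae : ∀ᵐ y ∂vol, Integrable (fun ξ => fE (y - Y ξ)) PΞ ∧
      (∫ ξ, fE (y - Y ξ) ∂PΞ) = (ρ' y).toReal := by
    filter_upwards [hρ'fin] with y hy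
    have hm1 : Measurable fun ξ => fE (y - Y ξ) :=
      hfEcont.measurable.comp (measurable_const.sub hY)
    have hint : Integrable (fun ξ => fE (y - Y ξ)) PΞ := by
      refine ⟨hm1.aestronglyMeasurable, ?_⟩
      rw [hasFiniteIntegral_iff_ofReal (Filter.Eventually.of_forall fun ξ => hfE0 _)]
      exact hy
    refine ⟨hint, ?_⟩
    rw [integral_eq_lintegral_of_nonneg_ae (Filter.Eventually.of_forall fun ξ => hfE0 _)
      hm1.aestronglyMeasurable]
  -- the bad set where X differs from X'
  have hA0 : ∀ᵐ q ∂(PΞ.prod vol), fE q.2 • X (q.1, Einv q.2) = fE q.2 • g q := by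
    set t : Set (Ξ × Θ) := toMeasurable μ {p | X p ≠ X' p} with htdef
    have htm : MeasurableSet t := measurableSet_toMeasurable _ _
    have htnull : μ t = 0 := by
      rw [htdef, measure_toMeasurable]
      exact ae_iff.mp hXX'
    set U : Set (Ξ × EuclideanSpace ℝ (Fin m)) :=
      (fun q : Ξ × EuclideanSpace ℝ (Fin m) => (q.1, Einv q.2)) ⁻¹' t with hUdef
    have hUm : MeasurableSet U :=
      (measurable_fst.prodMk (hEinvMeas.comp measurable_snd)) htm
    have hUnull : (PΞ.prod (vol.withDensity h)) U = 0 := by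
      rw [← hmapT, Measure.map_apply hTm hUm]
      have hTU : T ⁻¹' U = t := by
        ext p
        simp only [hUdef, hTdef, Set.mem_preimage, hEinvLeft p.2]
      rw [hTU]
      exact htnull
    have key0 : (PΞ.prod vol) ({q | (fun q : Ξ × EuclideanSpace ℝ (Fin m) => h q.2) q ≠ 0} ∩ U) = 0 := by
      rw [hν] at hUnull
      exact (withDensity_apply_eq_zero (hhm.comp measurable_snd)).mp hUnull
    have hae : ∀ᵐ q ∂(PΞ.prod vol),
        q ∉ ({q | (fun q : Ξ × EuclideanSpace ℝ (Fin m) => h q.2) q ≠ 0} ∩ U) :=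
      measure_eq_zero_iff_ae_notMem.mp key0
    filter_upwards [hae] with q hq
    by_cases hz : fE q.2 = 0
    · rw [hz, zero_smul, zero_smul]
    · have hh0 : h q.2 ≠ 0 := by
        simp only [hhdef, ne_eq, ENNReal.ofReal_eq_zero, not_le]
        exact lt_of_le_of_ne (hfE0 _) (Ne.symm hz)
      have hqU : q ∉ U := fun hU => hq ⟨hh0, hU⟩
      have hXeq : X (q.1, Einv q.2) = X' (q.1, Einv q.2) := by
        by_contra hne
        exact hqU (subset_toMeasurable _ _ hne)
      rw [hXeq]
  have hA : ∀ᵐ q ∂(PΞ.prod vol),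
      fE (q.2 - Y q.1) • X (q.1, Einv (q.2 - Y q.1)) = G q := by
    have := hφ.quasiMeasurePreserving.ae_eq_comp hA0
    exact this
  have hAsw : ∀ᵐ r ∂(vol.prod PΞ),
      fE (r.1 - Y r.2) • X (r.2, Einv (r.1 - Y r.2)) = G (r.2, r.1) := by
    have hsw : MeasurePreserving Prod.swap (vol.prod PΞ) (PΞ.prod vol) :=
      Measure.measurePreserving_swap
    exact hsw.quasiMeasurePreserving.ae_eq_comp hA
  have hNty : ∀ᵐ y ∂vol, ∀ᵐ ξ ∂PΞ,
      fE (y - Y ξ) • X (ξ, Einv (y - Y ξ)) = G (ξ, y) :=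
    Measure.ae_ae_of_ae_prod hAsw
  -- measurability of ρ and N2
  have hρsm : StronglyMeasurable fun y => ∫ ξ, fE (y - Y ξ) ∂PΞ := by
    have : StronglyMeasurable fun r : EuclideanSpace ℝ (Fin m) × Ξ => fE (r.1 - Y r.2) :=
      (hfEcont.measurable.comp (measurable_fst.sub (hY.comp measurable_snd))).stronglyMeasurable
    exact this.integral_prod_right'
  have hN2sm : StronglyMeasurable fun y => ∫ ξ, G (ξ, y) ∂PΞ := by
    have : StronglyMeasurable fun r : EuclideanSpace ℝ (Fin m) × Ξ => G (r.2, r.1) :=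
      hGsm.comp_measurable measurable_swap
    exact this.integral_prod_right'
  have hN2int : Integrable (fun y => ∫ ξ, G (ξ, y) ∂PΞ) vol := hGint.integral_prod_right
  -- the key a.e. identities
  have key : ∀ᵐ y ∂vol, (ρ' y).toReal • Φ y = ∫ ξ, G (ξ, y) ∂PΞ ∧
      Φ y = (if 0 < ∫ ξ, fE (y - Y ξ) ∂PΞ then
        (∫ ξ, fE (y - Y ξ) ∂PΞ)⁻¹ • ∫ ξ, G (ξ, y) ∂PΞ else 0) := by
    filter_upwards [hρae, hNty] with y hy1 hy2
    obtain ⟨hyint, hyeq⟩ := hy1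
    have hNeq : (∫ ξ, fE (y - Y ξ) • X (ξ, Einv (y - Y ξ)) ∂PΞ) = ∫ ξ, G (ξ, y) ∂PΞ :=
      integral_congr_ae hy2
    simp only [hΦ]
    by_cases hpos : 0 < ∫ ξ, fE (y - Y ξ) ∂PΞ
    · rw [if_pos hpos, if_pos hpos]
      refine ⟨?_, by rw [hNeq]⟩
      rw [← hyeq, smul_smul, mul_inv_cancel₀ (ne_of_gt hpos), one_smul, hNeq]
    · rw [if_neg hpos, if_neg hpos]
      have h0 : (∫ ξ, fE (y - Y ξ) ∂PΞ) = 0 :=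
        le_antisymm (not_lt.mp hpos) (integral_nonneg fun ξ => hfE0 _)
      have hae0 : (fun ξ => fE (y - Y ξ)) =ᵐ[PΞ] 0 :=
        (integral_eq_zero_iff_of_nonneg (fun ξ => hfE0 _) hyint).mp h0
      have hN20 : (∫ ξ, G (ξ, y) ∂PΞ) = 0 := by
        have : (fun ξ => G (ξ, y)) =ᵐ[PΞ] fun _ => 0 := by
          filter_upwards [hae0] with ξ hξ
          have hξ' : fE (y - Y ξ) = 0 := hξ
          simp only [hGdef, hξ', zero_smul]
        rw [integral_congr_ae this, integral_zero]
      exact ⟨by rw [smul_zero, hN20], rfl⟩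
  have key2 : Φ =ᵐ[vol] fun y => (if 0 < ∫ ξ, fE (y - Y ξ) ∂PΞ then
      (∫ ξ, fE (y - Y ξ) ∂PΞ)⁻¹ • ∫ ξ, G (ξ, y) ∂PΞ else 0) := by
    filter_upwards [key] with y hy
    exact hy.2
  -- strong measurability of the good version of Φ
  have hΦ'sm : StronglyMeasurable fun y => (if 0 < ∫ ξ, fE (y - Y ξ) ∂PΞ then
      (∫ ξ, fE (y - Y ξ) ∂PΞ)⁻¹ • ∫ ξ, G (ξ, y) ∂PΞ else 0) := by
    refine Measurable.stronglyMeasurable ?_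
    exact Measurable.ite (measurableSet_lt measurable_const hρsm.measurable)
      (hρsm.measurable.inv.smul hN2sm.measurable) measurable_const
  have hac : vol.withDensity ρ' ≪ vol := withDensity_absolutelyContinuous _ _
  have hΦaesm : AEStronglyMeasurable Φ (vol.withDensity ρ') :=
    ⟨_, hΦ'sm, key2.filter_mono hac.ae_le⟩
  -- rewriting the density with values in ℝ≥0
  have hwd : vol.withDensity ρ' = vol.withDensity (fun y => ((ρ' y).toNNReal : ℝ≥0∞)) :=
    withDensity_congr_ae (by filter_upwards [hρ'fin] with y hy
                             rw [ENNReal.coe_toNNReal hy.ne])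
  have hρ'NNm : Measurable fun y => (ρ' y).toNNReal :=
    ENNReal.measurable_toNNReal.comp hρ'm
  have key1' : ∀ᵐ y ∂vol, (ρ' y).toNNReal • Φ y = ∫ ξ, G (ξ, y) ∂PΞ := by
    filter_upwards [key] with y hy
    rw [NNReal.smul_def]
    exact hy.1
  -- Part 1 : integrability of Φ
  have hΦint : Integrable Φ (μ.map (fun p : Ξ × Θ => Y p.1 + E p.2)) := by
    rw [hmapZ, hwd, integrable_withDensity_iff_integrable_smul₀
      (f := fun y => (ρ' y).toNNReal) hρ'NNm.aemeasurable]
    exact (integrable_congr key1').mpr hN2int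
  refine ⟨hΦint, fun B hB => ?_⟩
  -- LHS computation
  have hXgT : X =ᵐ[μ] g ∘ T := hXX'.trans (by rw [hgT])
  have hABm : MeasurableSet ((fun q : Ξ × EuclideanSpace ℝ (Fin m) => Y q.1 + q.2) ⁻¹' B) :=
    hSm hB
  have hrestr : (PΞ.prod vol).restrict (Prod.snd ⁻¹' B) = PΞ.prod (vol.restrict B) := by
    rw [show (Prod.snd ⁻¹' B : Set (Ξ × EuclideanSpace ℝ (Fin m))) = univ ×ˢ B from
      by ext q; simp, ← Measure.prod_restrict, Measure.restrict_univ]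
  have hGint' : Integrable G (PΞ.prod (vol.restrict B)) := by
    rw [← hrestr]; exact hGint.restrict
  have hLHS : ∫ ω in (fun p : Ξ × Θ => Y p.1 + E p.2) ⁻¹' B, X ω ∂μ
      = ∫ y in B, (∫ ξ, G (ξ, y) ∂PΞ) ∂vol := by
    calc ∫ ω in (fun p : Ξ × Θ => Y p.1 + E p.2) ⁻¹' B, X ω ∂μ
        = ∫ ω in (fun p : Ξ × Θ => Y p.1 + E p.2) ⁻¹' B, (g ∘ T) ω ∂μ :=
          integral_congr_ae (ae_restrict_of_ae hXgT)
      _ = ∫ q in (fun q : Ξ × EuclideanSpace ℝ (Fin m) => Y q.1 + q.2) ⁻¹' B, g q ∂(μ.map T) :=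
          (setIntegral_map hABm hgsm.aestronglyMeasurable hTm.aemeasurable).symm
      _ = ∫ q in (fun q : Ξ × EuclideanSpace ℝ (Fin m) => Y q.1 + q.2) ⁻¹' B, K q
            ∂(PΞ.prod vol) := by
          rw [hmapT, hν, restrict_withDensity hABm]
          rw [show (fun q : Ξ × EuclideanSpace ℝ (Fin m) => h q.2)
              = fun q => (((fE q.2).toNNReal : ℝ≥0) : ℝ≥0∞) from rfl]
          rw [integral_withDensity_eq_integral_smul₀
            (f := fun q : Ξ × EuclideanSpace ℝ (Fin m) => (fE q.2).toNNReal)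
            ((hfEcont.measurable.comp measurable_snd).real_toNNReal.aemeasurable) g]
          refine integral_congr_ae (Filter.Eventually.of_forall fun q => ?_)
          show (fE q.2).toNNReal • g q = fE q.2 • g q
          rw [NNReal.smul_def, Real.coe_toNNReal _ (hfE0 _)]
      _ = ∫ q, ((fun q : Ξ × EuclideanSpace ℝ (Fin m) => Y q.1 + q.2) ⁻¹' B).indicator K q
            ∂(PΞ.prod vol) := (integral_indicator hABm).symm
      _ = ∫ q, ((fun q : Ξ × EuclideanSpace ℝ (Fin m) => Y q.1 + q.2) ⁻¹' B).indicator K (φ q)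
            ∂(PΞ.prod vol) := by
          conv_lhs => rw [← hφ.map_eq]
          exact integral_map hφ.measurable.aemeasurable
            (by rw [hφ.map_eq]; exact (hKsm.indicator hABm).aestronglyMeasurable)
      _ = ∫ q, (Prod.snd ⁻¹' B).indicator G q ∂(PΞ.prod vol) := by
          refine integral_congr_ae (Filter.Eventually.of_forall fun q => ?_)
          have hq2 : Y q.1 + (q.2 - Y q.1) = q.2 := by abel
          simp only [Set.indicator_apply, Set.mem_preimage, hφdef, hq2]
          rfl
      _ = ∫ q in Prod.snd ⁻¹' B, G q ∂(PΞ.prod vol) := integral_indicator (measurable_snd hB)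
      _ = ∫ q, G q ∂(PΞ.prod (vol.restrict B)) := by rw [← hrestr]
      _ = ∫ ξ, ∫ y, G (ξ, y) ∂(vol.restrict B) ∂PΞ := integral_prod _ hGint'
      _ = ∫ y, ∫ ξ, G (ξ, y) ∂PΞ ∂(vol.restrict B) :=
          integral_integral_swap (f := fun ξ y => G (ξ, y)) hGint'
  -- RHS computation
  have hRHS : ∫ ω in (fun p : Ξ × Θ => Y p.1 + E p.2) ⁻¹' B,
      Φ ((fun p : Ξ × Θ => Y p.1 + E p.2) ω) ∂μ
      = ∫ y in B, (∫ ξ, G (ξ, y) ∂PΞ) ∂vol := by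
    calc ∫ ω in (fun p : Ξ × Θ => Y p.1 + E p.2) ⁻¹' B,
          Φ ((fun p : Ξ × Θ => Y p.1 + E p.2) ω) ∂μ
        = ∫ y in B, Φ y ∂(μ.map (fun p : Ξ × Θ => Y p.1 + E p.2)) :=
          (setIntegral_map hB (by rw [hmapZ]; exact hΦaesm) hZm.aemeasurable).symm
      _ = ∫ y in B, (ρ' y).toNNReal • Φ y ∂vol := by
          rw [hmapZ, hwd, restrict_withDensity hB,
            integral_withDensity_eq_integral_smul₀
              (f := fun y => (ρ' y).toNNReal) hρ'NNm.aemeasurable Φ]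
      _ = ∫ y in B, (∫ ξ, G (ξ, y) ∂PΞ) ∂vol :=
          integral_congr_ae (ae_restrict_of_ae key1')
  rw [hLHS, hRHS]
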